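/- Let v₀ > 0 and let m : ℝ → ℝ be continuously differentiable and nondecreasing with m(v) = 0 for v ≤ 0, m(v) > 0 for v > 0, and m′(v) ≤ 1/16 for all v ∈ (0, v₀). Suppose r : (0, v₀] → ℝ is differentiable with r(s) > 0, satisfies r′(s) = 1/2 − m(s)/r(s) for all s ∈ (0, v₀], and 2·m(v₀) ≤ r(v₀) ≤ 4·m(v₀). Then 2·m(s) ≤ r(s) ≤ 4·m(s) for all s ∈ (0, v₀], and r(s) → 0 as s → 0⁺. -/

import Mathlib

open Set Filter Topology

/-- If `f` has a negative derivative at `x`, then `f y < f x` for `y` slightly to the right. -/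
lemma eventually_lt_of_hasDerivAt_neg {f : ℝ → ℝ} {c x : ℝ}
    (hf : HasDerivAt f c x) (hc : c < 0) : ∀ᶠ y in 𝓝[>] x, f y < f x := by
  have hslope : Tendsto (slope f x) (𝓝[≠] x) (𝓝 c) :=
    hasDerivAt_iff_tendsto_slope.1 hf
  have h1 : ∀ᶠ y in 𝓝[>] x, slope f x y < 0 :=
    ((hslope.mono_left (nhdsWithin_mono _ fun y hy => ne_of_gt hy)).eventually
      (eventually_lt_nhds hc)).mono fun y hy => hy
  filter_upwards [h1, self_mem_nhdsWithin] with y hy (hxy : x < y)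
  have hne : (0:ℝ) < y - x := sub_pos.2 hxy
  rw [slope_def_field] at hy
  rcases div_neg_iff.1 hy with ⟨h1, h2⟩ | ⟨h1, h2⟩ <;> linarith

/-- Continuous induction: if `f a ≤ c` and whenever `f x ≤ c` (with `x ∈ [a,b)`) `f` drops
below `f x` just to the right, then `f b ≤ c`. -/
lemma le_propagate {a b c : ℝ} {f : ℝ → ℝ} (hab : a ≤ b)
    (hcont : ContinuousOn f (Icc a b)) (hfa : f a ≤ c)
    (hd : ∀ x ∈ Ico a b, f x ≤ c → ∀ᶠ y in 𝓝[>] x, f y < f x) :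
    f b ≤ c := by
  have key : Icc a b ⊆ {t | t ∈ Icc a b → f t ≤ c} := by
    apply IsClosed.Icc_subset_of_forall_mem_nhdsWithin
    · have : {t | t ∈ Icc a b → f t ≤ c} ∩ Icc a b = Icc a b ∩ f ⁻¹' Iic c := by
        ext t; simp only [mem_inter_iff, mem_setOf_eq, mem_preimage, mem_Iic]
        constructor
        · rintro ⟨h1, h2⟩; exact ⟨h2, h1 h2⟩
        · rintro ⟨h1, h2⟩; exact ⟨fun _ => h2, h1⟩
      rw [this]
      exact hcont.preimage_isClosed_of_isClosed isClosed_Icc isClosed_Iic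
    · exact fun _ => hfa
    · rintro x ⟨hx, hx2⟩
      have hfx : f x ≤ c := hx ⟨hx2.1, le_of_lt hx2.2⟩
      filter_upwards [hd x hx2 hfx] with y hy
      exact fun _ => le_trans (le_of_lt hy) hfx
  exact key ⟨hab, le_rfl⟩ ⟨hab, le_rfl⟩

/-- A monotone differentiable function has nonnegative derivative. -/
lemma deriv_nonneg_of_monotone {m : ℝ → ℝ} (hm : ContDiff ℝ 1 m) (hmono : Monotone m)
    (x : ℝ) : 0 ≤ deriv m x := by
  have hder : HasDerivAt m (deriv m x) x :=
    ((hm.differentiable one_ne_zero) x).hasDerivAt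
  have hslope : Tendsto (slope m x) (𝓝[≠] x) (𝓝 (deriv m x)) :=
    hasDerivAt_iff_tendsto_slope.1 hder
  refine ge_of_tendsto hslope ?_
  filter_upwards [self_mem_nhdsWithin] with y (hy : y ≠ x)
  rw [slope_def_field]
  rcases lt_or_gt_of_ne hy with h | h
  · rw [div_nonneg_iff]
    exact Or.inr ⟨sub_nonpos.2 (hmono h.le), sub_nonpos.2 h.le⟩
  · exact div_nonneg (sub_nonneg.2 (hmono h.le)) (sub_nonneg.2 h.le)

/-- Naked singularities in Vaidya spacetimes: if `m` is `C¹`, nondecreasing, vanishes for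
`v ≤ 0`, is positive for `v > 0` and satisfies `m′ ≤ 1/16` on `(0, v₀)`, then any positive
solution `r` of `r′(s) = 1/2 − m(s)/r(s)` on `(0, v₀]` with `2·m(v₀) ≤ r(v₀) ≤ 4·m(v₀)`
satisfies `2·m(s) ≤ r(s) ≤ 4·m(s)` throughout and `r(s) → 0` as `s → 0⁺`. -/
theorem vaidya_naked_singularity (v₀ : ℝ) (hv₀ : 0 < v₀)
    (m : ℝ → ℝ) (hm : ContDiff ℝ 1 m) (hmono : Monotone m)
    (hm0 : ∀ v : ℝ, v ≤ 0 → m v = 0) (hmpos : ∀ v : ℝ, 0 < v → 0 < m v)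
    (hm' : ∀ v ∈ Set.Ioo (0 : ℝ) v₀, deriv m v ≤ 1 / 16)
    (r : ℝ → ℝ)
    (hpos : ∀ s ∈ Set.Ioc (0 : ℝ) v₀, 0 < r s)
    (hode : ∀ s ∈ Set.Ioc (0 : ℝ) v₀,
      HasDerivWithinAt r (1 / 2 - m s / r s) (Set.Ioc (0 : ℝ) v₀) s)
    (hlow : 2 * m v₀ ≤ r v₀) (hhigh : r v₀ ≤ 4 * m v₀) :
    (∀ s ∈ Set.Ioc (0 : ℝ) v₀, 2 * m s ≤ r s ∧ r s ≤ 4 * m s) ∧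
      Tendsto r (nhdsWithin 0 (Set.Ioi 0)) (𝓝 0) := by
  -- continuity of r on Ioc
  have hrcont : ContinuousOn r (Set.Ioc (0 : ℝ) v₀) :=
    fun s hs => (hode s hs).continuousWithinAt
  have hmd : Differentiable ℝ m := hm.differentiable one_ne_zero
  -- derivative of r at interior points (as HasDerivAt)
  have hrD : ∀ x ∈ Set.Ioo (0 : ℝ) v₀, HasDerivAt r (1 / 2 - m x / r x) x := by
    intro x hx
    exact (hode x ⟨hx.1, hx.2.le⟩).hasDerivAt (Ioc_mem_nhds hx.1 hx.2)
  -- main bounds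
  have hbounds : ∀ s ∈ Set.Ioc (0 : ℝ) v₀, 2 * m s ≤ r s ∧ r s ≤ 4 * m s := by
    intro s₀ hs₀
    rcases eq_or_lt_of_le hs₀.2 with rfl | hs₀v
    · exact ⟨hlow, hhigh⟩
    have hsub : Set.Icc s₀ v₀ ⊆ Set.Ioc (0 : ℝ) v₀ :=
      fun t ht => ⟨lt_of_lt_of_le hs₀.1 ht.1, ht.2⟩
    have hsub' : Set.Ico s₀ v₀ ⊆ Set.Ioo (0 : ℝ) v₀ :=
      fun t ht => ⟨lt_of_lt_of_le hs₀.1 ht.1, ht.2⟩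
    constructor
    · -- lower bound: suppose r s₀ < 2 m s₀ and propagate f = r - 2m staying ≤ f s₀ < 0
      by_contra hcon
      push_neg at hcon
      set f : ℝ → ℝ := fun t => r t - 2 * m t with hf
      have hfa : f s₀ < 0 := by simp only [hf]; linarith
      have hfb : f v₀ ≤ f s₀ := by
        refine le_propagate hs₀v.le ?_ le_rfl ?_
        · exact (hrcont.mono hsub).sub ((hmd.continuous.continuousOn).const_smul 2 |>.congr
            (fun t _ => by simp [smul_eq_mul]))
        · intro x hx hfx
          have hx' : x ∈ Set.Ioo (0 : ℝ) v₀ := hsub' hx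
          have hxIoc : x ∈ Set.Ioc (0 : ℝ) v₀ := ⟨hx'.1, hx'.2.le⟩
          have hrx : 0 < r x := hpos x hxIoc
          have hmx : 0 < m x := hmpos x hx'.1
          have hfd : HasDerivAt f (1 / 2 - m x / r x - 2 * deriv m x) x :=
            (hrD x hx').sub (((hmd x).hasDerivAt).const_mul 2)
          refine eventually_lt_of_hasDerivAt_neg hfd ?_
          have hlt : r x < 2 * m x := by
            have := hfx; simp only [hf] at this; linarith
          have h12 : (1:ℝ)/2 < m x / r x := by
            rw [lt_div_iff₀ hrx]; linarith
          have hdm : 0 ≤ deriv m x := deriv_nonneg_of_monotone hm hmono x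
          linarith
      have : f v₀ < 0 := lt_of_le_of_lt hfb hfa
      simp only [hf] at this; linarith
    · -- upper bound: suppose r s₀ > 4 m s₀ and propagate f = 4m - r
      by_contra hcon
      push_neg at hcon
      set f : ℝ → ℝ := fun t => 4 * m t - r t with hf
      have hfa : f s₀ < 0 := by simp only [hf]; linarith
      have hfb : f v₀ ≤ f s₀ := by
        refine le_propagate hs₀v.le ?_ le_rfl ?_
        · exact ((hmd.continuous.continuousOn).const_smul 4 |>.congr
            (fun t _ => by simp [smul_eq_mul])).sub (hrcont.mono hsub)
        · intro x hx hfx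
          have hx' : x ∈ Set.Ioo (0 : ℝ) v₀ := hsub' hx
          have hxIoc : x ∈ Set.Ioc (0 : ℝ) v₀ := ⟨hx'.1, hx'.2.le⟩
          have hrx : 0 < r x := hpos x hxIoc
          have hmx : 0 < m x := hmpos x hx'.1
          have hfd : HasDerivAt f (4 * deriv m x - (1 / 2 - m x / r x)) x :=
            (((hmd x).hasDerivAt).const_mul 4).sub (hrD x hx')
          refine eventually_lt_of_hasDerivAt_neg hfd ?_
          have hlt : 4 * m x < r x := by
            have := hfx; simp only [hf] at this; linarith
          have h14 : m x / r x < 1/4 := by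
            rw [div_lt_iff₀ hrx]; linarith
          have hdm : deriv m x ≤ 1/16 := hm' x hx'
          linarith
      have : f v₀ < 0 := lt_of_le_of_lt hfb hfa
      simp only [hf] at this; linarith
  refine ⟨hbounds, ?_⟩
  -- squeeze: 0 < r s ≤ 4 m s and m s → m 0 = 0
  have hm4 : Tendsto (fun s => 4 * m s) (𝓝[>] (0:ℝ)) (𝓝 0) := by
    have : Tendsto m (𝓝[>] (0:ℝ)) (𝓝 (m 0)) :=
      (hmd.continuous.tendsto 0).mono_left nhdsWithin_le_nhds
    rw [hm0 0 le_rfl] at this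
    simpa using this.const_mul 4
  have hmem : Set.Ioc (0:ℝ) v₀ ∈ 𝓝[>] (0:ℝ) :=
    Ioc_mem_nhdsGT_of_mem ⟨le_rfl, hv₀⟩
  refine tendsto_of_tendsto_of_tendsto_of_le_of_le' tendsto_const_nhds hm4 ?_ ?_
  · filter_upwards [hmem] with s hs
    exact (hpos s hs).le
  · filter_upwards [hmem] with s hs
    exact (hbounds s hs).2
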